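/- Let B ≥ 1 and let s_1, …, s_n ∈ (0, min{1, B/2}] be demand sizes. For every partition P of the index set {1, …, n} into classes on each of which the size is constant, the optimal value of the configuration LP relative to P is the same; in particular it equals the optimal value of the configuration LP relative to the partition into classes of equal size values. -/

import Mathlib

open scoped BigOperators

/-- Given demand sizes `s : Fin n → ℝ`, a partition of the index set into classes indexed
by `ι` (via the class map `p`, surjective so that every class is nonempty) on each of which
the size is constant with value `σ t` for class `t`, a `P`-configuration is a function
`c : ι → ℕ` with `Σ_t c t · σ t ≤ 1` and `Σ_t c t · σ t + max {σ t : c t > 0} ≤ B`. -/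
def IsPConfig {ι : Type} [Fintype ι] (B : ℝ) (σ : ι → ℝ) (c : ι → ℕ) : Prop :=
  (∑ t, (c t : ℝ) * σ t) ≤ 1 ∧ ∀ t, 0 < c t → (∑ t', (c t' : ℝ) * σ t') + σ t ≤ B

/-- The optimal value of the configuration LP relative to the partition with class map
`p : Fin n → ι` and class sizes `σ : ι → ℝ`: minimize `Σ_c x_c` over finitely supported
`x ≥ 0` on `P`-configurations with `Σ_c x_c · c t ≥ 2 · n_t` for every class `t`, where
`n_t` is the number of indices in class `t`. -/
noncomputable def LPvalue {n : ℕ} {ι : Type} [Fintype ι] (B : ℝ) (p : Fin n → ι)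
    (σ : ι → ℝ) : ℝ :=
  sInf {v | ∃ x : (ι → ℕ) →₀ ℝ,
    (∀ c, 0 ≤ x c) ∧
    (∀ c ∈ x.support, IsPConfig B σ c) ∧
    (∀ t, 2 * ((Nat.card {i : Fin n // p i = t} : ℝ)) ≤
      ∑ c ∈ x.support, x c * (c t : ℝ)) ∧
    (∑ c ∈ x.support, x c) = v}

open Finset

/-- counting the indices of size `v` class by class -/
private lemma fiber_sum {n : ℕ} {ι : Type} [Fintype ι] [DecidableEq ι] (s : Fin n → ℝ)
    (p : Fin n → ι) (σ : ι → ℝ) (hσ : ∀ i, s i = σ (p i)) (v : ℝ) :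
    ∑ t ∈ univ.filter (fun t => σ t = v), (Nat.card {i // p i = t} : ℝ)
      = ((univ.filter fun i => s i = v).card : ℝ) := by
  classical
  have h1 : ∀ t : ι, (Nat.card {i // p i = t} : ℝ)
      = (((univ : Finset (Fin n)).filter fun i => p i = t).card : ℝ) := by
    intro t; simp [Nat.card_eq_fintype_card, Fintype.card_subtype]
  simp_rw [h1]
  rw [← Nat.cast_sum, Nat.cast_inj]
  rw [Finset.card_eq_sum_card_fiberwise
    (f := p) (t := univ.filter fun t => σ t = v)
    (fun i hi => by simp only [Finset.mem_coe, mem_filter, mem_univ, true_and] at hi ⊢; rw [← hi, hσ i])]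
  refine (Finset.sum_congr rfl fun t ht => ?_).symm
  simp only [mem_filter, mem_univ, true_and] at ht
  congr 1
  ext i
  simp only [mem_filter, mem_univ, true_and, and_iff_right_iff_imp]
  intro hpi
  rw [hσ i, hpi, ht]

private lemma mapDomain_nonneg {α β : Type} [DecidableEq β] (f : α → β) (x : α →₀ ℝ)
    (hx : ∀ a, 0 ≤ x a) (b : β) : 0 ≤ (Finsupp.mapDomain f x) b := by
  classical
  rw [Finsupp.mapDomain, Finsupp.sum_apply]
  refine Finset.sum_nonneg fun a _ => ?_
  simp only [Finsupp.single_apply]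
  split
  · exact hx a
  · exact le_refl 0

private lemma LP_le (B : ℝ) (hB : 1 ≤ B) (n : ℕ) (s : Fin n → ℝ)
    (hs : ∀ i, 0 < s i ∧ s i ≤ min 1 (B / 2))
    {ι₁ ι₂ : Type} [Fintype ι₁] [Fintype ι₂]
    (p₁ : Fin n → ι₁) (σ₁ : ι₁ → ℝ) (hp₁ : Function.Surjective p₁)
    (hσ₁ : ∀ i, s i = σ₁ (p₁ i))
    (p₂ : Fin n → ι₂) (σ₂ : ι₂ → ℝ) (hp₂ : Function.Surjective p₂)
    (hσ₂ : ∀ i, s i = σ₂ (p₂ i)) :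
    LPvalue B p₁ σ₁ ≤ LPvalue B p₂ σ₂ := by
  classical
  unfold LPvalue
  set S₁ := {v | ∃ x : (ι₁ → ℕ) →₀ ℝ,
    (∀ c, 0 ≤ x c) ∧
    (∀ c ∈ x.support, IsPConfig B σ₁ c) ∧
    (∀ t, 2 * ((Nat.card {i : Fin n // p₁ i = t} : ℝ)) ≤
      ∑ c ∈ x.support, x c * (c t : ℝ)) ∧
    (∑ c ∈ x.support, x c) = v} with hS₁
  set S₂ := {v | ∃ x : (ι₂ → ℕ) →₀ ℝ,
    (∀ c, 0 ≤ x c) ∧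
    (∀ c ∈ x.support, IsPConfig B σ₂ c) ∧
    (∀ t, 2 * ((Nat.card {i : Fin n // p₂ i = t} : ℝ)) ≤
      ∑ c ∈ x.support, x c * (c t : ℝ)) ∧
    (∑ c ∈ x.support, x c) = v} with hS₂
  -- S₁ is bounded below by 0
  have hbdd : BddBelow S₁ := by
    refine ⟨0, fun v hv => ?_⟩
    obtain ⟨x, hx0, -, -, rfl⟩ := hv
    exact Finset.sum_nonneg fun c _ => hx0 c
  -- S₂ is nonempty
  have hσ₂p : ∀ t, 0 < σ₂ t ∧ σ₂ t ≤ min 1 (B / 2) := by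
    intro t; obtain ⟨i, rfl⟩ := hp₂ t
    rw [← hσ₂ i]; exact hs i
  have hne : S₂.Nonempty := by
    set N : ι₂ → ℝ := fun t => (Nat.card {i : Fin n // p₂ i = t} : ℝ) with hN
    have hNnn : ∀ t, 0 ≤ N t := fun t => Nat.cast_nonneg _
    set x : (ι₂ → ℕ) →₀ ℝ :=
      ∑ t : ι₂, Finsupp.single (Pi.single t 1 : ι₂ → ℕ) (2 * N t) with hxdef
    have hcfg : ∀ t : ι₂, IsPConfig B σ₂ (Pi.single t 1) := by
      intro t
      have hsum : ∑ t', (((Pi.single t 1 : ι₂ → ℕ) t' : ℕ) : ℝ) * σ₂ t' = σ₂ t := by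
        simp [Pi.single_apply, ite_mul]
      constructor
      · rw [hsum]
        exact le_trans (hσ₂p t).2 (min_le_left _ _)
      · intro t' ht'
        have htt : t' = t := by
          by_contra h
          rw [Pi.single_apply] at ht'
          simp [h] at ht'
        subst htt
        rw [hsum]
        have h1 := (hσ₂p t').2
        have h2 : σ₂ t' ≤ B / 2 := le_trans h1 (min_le_right _ _)
        linarith
    have hxsum : ∀ f : (ι₂ → ℕ) → ℝ,
        x.sum (fun c y => y * f c) = ∑ t : ι₂, (2 * N t) * f (Pi.single t 1) := by
      intro f
      rw [hxdef, ← Finsupp.sum_finset_sum_index (fun c => zero_mul (f c))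
        (fun c b₁ b₂ => add_mul b₁ b₂ (f c))]
      exact Finset.sum_congr rfl fun t _ => Finsupp.sum_single_index (by simp)
    refine ⟨∑ t : ι₂, 2 * N t, x, ?_, ?_, ?_, ?_⟩
    · intro c
      rw [hxdef, Finset.sum_apply']
      refine Finset.sum_nonneg fun t _ => ?_
      simp only [Finsupp.single_apply]
      split
      · positivity
      · exact le_refl 0
    · intro c hc
      rw [hxdef] at hc
      obtain ⟨t, -, ht⟩ := Finsupp.mem_support_finset_sum c hc
      have hc' : c = Pi.single t 1 := by
        have h2 := Finsupp.support_single_subset ht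
        rw [Finset.mem_singleton] at h2
        exact h2
      rw [hc']; exact hcfg t
    · intro t
      have : (∑ c ∈ x.support, x c * (c t : ℝ)) = x.sum fun c y => y * (c t : ℝ) := rfl
      rw [this, hxsum fun c => (c t : ℝ)]
      have : ∀ t' : ι₂, (2 * N t') * (((Pi.single t' 1 : ι₂ → ℕ) t : ℕ) : ℝ)
          = if t = t' then 2 * N t' else 0 := by
        intro t'
        rw [Pi.single_apply]
        by_cases h : t = t' <;> simp [h, eq_comm]
      rw [Finset.sum_congr rfl fun t' _ => this t', Finset.sum_ite_eq]
      simp [hN]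
    · have : (∑ c ∈ x.support, x c) = x.sum fun _ y => y := rfl
      rw [this]
      have := hxsum fun _ => (1 : ℝ)
      simpa using this
  -- S₂ ⊆ S₁
  have hsub : S₂ ⊆ S₁ := by
    rintro v ⟨x₂, hx₂0, hx₂cfg, hx₂cov, rfl⟩
    set N₁ : ι₁ → ℝ := fun t => (Nat.card {i : Fin n // p₁ i = t} : ℝ) with hN₁
    set N₂ : ι₂ → ℝ := fun t => (Nat.card {i : Fin n // p₂ i = t} : ℝ) with hN₂
    set M : ℝ → ℝ := fun v => ((univ.filter fun i => s i = v).card : ℝ) with hM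
    have hMpos₁ : ∀ t₁ : ι₁, 0 < M (σ₁ t₁) := by
      intro t₁; obtain ⟨i, rfl⟩ := hp₁ t₁
      have hi : i ∈ univ.filter fun j => s j = σ₁ (p₁ i) := by
        simp only [mem_filter, mem_univ, true_and]; exact hσ₁ i
      simp only [hM]
      exact_mod_cast Finset.card_pos.mpr ⟨i, hi⟩
    have hMpos₂ : ∀ t₂ : ι₂, 0 < M (σ₂ t₂) := by
      intro t₂; obtain ⟨i, rfl⟩ := hp₂ t₂
      have hi : i ∈ univ.filter fun j => s j = σ₂ (p₂ i) := by
        simp only [mem_filter, mem_univ, true_and]; exact hσ₂ i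
      simp only [hM]
      exact_mod_cast Finset.card_pos.mpr ⟨i, hi⟩
    set lam : ι₂ → ι₁ → ℝ := fun t₂ t₁ => N₁ t₁ / M (σ₂ t₂) with hlam
    set F : ι₂ → Finset ι₁ := fun t₂ => univ.filter fun t₁ => σ₁ t₁ = σ₂ t₂ with hF
    set T : Finset (ι₂ → ι₁) := Fintype.piFinset F with hT
    set w : (ι₂ → ι₁) → ℝ := fun τ => ∏ t₂, lam t₂ (τ t₂) with hw
    set Φ : (ι₂ → ι₁) → (ι₂ → ℕ) → ι₁ → ℕ :=
      fun τ c t₁ => ∑ t₂ ∈ univ.filter fun t₂ => τ t₂ = t₁, c t₂ with hΦ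
    set x₁ : (ι₁ → ℕ) →₀ ℝ := ∑ τ ∈ T, w τ • x₂.mapDomain (Φ τ) with hx₁
    have hlam0 : ∀ t₂ t₁, 0 ≤ lam t₂ t₁ := fun t₂ t₁ =>
      div_nonneg (Nat.cast_nonneg _) (le_of_lt (hMpos₂ t₂))
    have hw0 : ∀ τ, 0 ≤ w τ := fun τ => Finset.prod_nonneg fun t₂ _ => hlam0 t₂ (τ t₂)
    have hlam_sum : ∀ t₂, ∑ t₁ ∈ F t₂, lam t₂ t₁ = 1 := by
      intro t₂
      simp only [hlam, hF, hN₁, hM]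
      rw [← Finset.sum_div, fiber_sum s p₁ σ₁ hσ₁ (σ₂ t₂), div_self]
      have := hMpos₂ t₂
      simp only [hM] at this
      exact ne_of_gt this
    have hw_sum : ∑ τ ∈ T, w τ = 1 := by
      rw [hT, hw, ← Finset.prod_univ_sum F lam]
      simp only [hlam_sum]
      exact Finset.prod_const_one
    have hτF : ∀ τ ∈ T, ∀ t₂, σ₁ (τ t₂) = σ₂ t₂ := by
      intro τ hτ t₂
      have := (Fintype.mem_piFinset.mp hτ) t₂
      simp only [hF, mem_filter, mem_univ, true_and] at this
      exact this
    have hW : ∀ (t₂ : ι₂) (t₁ : ι₁), ∑ τ ∈ T.filter (fun τ => τ t₂ = t₁), w τ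
        = if σ₁ t₁ = σ₂ t₂ then lam t₂ t₁ else 0 := by
      intro t₂ t₁
      by_cases h : σ₁ t₁ = σ₂ t₂
      · rw [if_pos h]
        have hTF : T.filter (fun τ => τ t₂ = t₁)
            = Fintype.piFinset (Function.update F t₂ {t₁}) := by
          ext τ
          simp only [Finset.mem_filter, hT, Fintype.mem_piFinset]
          constructor
          · rintro ⟨hτ, hτt⟩ t
            rcases eq_or_ne t t₂ with rfl | hne
            · rw [Function.update_self, Finset.mem_singleton]; exact hτt
            · rw [Function.update_of_ne hne]; exact hτ t
          · intro hτ
            have ht2 : τ t₂ = t₁ := by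
              have := hτ t₂; rwa [Function.update_self, Finset.mem_singleton] at this
            refine ⟨fun t => ?_, ht2⟩
            rcases eq_or_ne t t₂ with rfl | hne
            · rw [ht2]
              simp only [hF, mem_filter, mem_univ, true_and]
              exact h
            · have := hτ t; rwa [Function.update_of_ne hne] at this
        rw [hTF, hw, ← Finset.prod_univ_sum]
        have hfac : ∀ t : ι₂, (∑ j ∈ Function.update F t₂ {t₁} t, lam t j)
            = if t = t₂ then lam t₂ t₁ else 1 := by
          intro t
          rcases eq_or_ne t t₂ with rfl | hne
          · rw [Function.update_self, if_pos rfl, Finset.sum_singleton]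
          · rw [Function.update_of_ne hne, if_neg hne]; exact hlam_sum t
        rw [Finset.prod_congr rfl fun t _ => hfac t]
        simp
      · rw [if_neg h, Finset.filter_false_of_mem, Finset.sum_empty]
        intro τ hτ hτt
        exact h (hτt ▸ hτF τ hτ t₂)
    have hsum_eval : ∀ f : (ι₁ → ℕ) → ℝ,
        x₁.sum (fun c y => y * f c)
          = ∑ τ ∈ T, w τ * x₂.sum (fun c y => y * f (Φ τ c)) := by
      intro f
      rw [hx₁, ← Finsupp.sum_finset_sum_index (fun c => zero_mul (f c))
        (fun c b₁ b₂ => add_mul b₁ b₂ (f c))]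
      refine Finset.sum_congr rfl fun τ _ => ?_
      rw [Finsupp.sum_smul_index (fun c => zero_mul (f c))]
      rw [Finsupp.sum_mapDomain_index (fun c => by simp)
        (fun c m₁ m₂ => by ring)]
      rw [Finsupp.mul_sum]
      exact Finsupp.sum_congr fun c _ => mul_assoc _ _ _
    have hkey : ∀ τ ∈ T, ∀ c₂ : ι₂ → ℕ,
        ∑ t₁, ((Φ τ c₂ t₁ : ℕ) : ℝ) * σ₁ t₁ = ∑ t₂, ((c₂ t₂ : ℕ) : ℝ) * σ₂ t₂ := by
      intro τ hτ c₂
      calc ∑ t₁, ((Φ τ c₂ t₁ : ℕ) : ℝ) * σ₁ t₁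
          = ∑ t₁, ∑ t₂ ∈ univ.filter (fun t₂ => τ t₂ = t₁), (c₂ t₂ : ℝ) * σ₁ t₁ := by
            refine Finset.sum_congr rfl fun t₁ _ => ?_
            simp only [hΦ]
            push_cast
            rw [Finset.sum_mul]
        _ = ∑ t₁, ∑ t₂ ∈ univ.filter (fun t₂ => τ t₂ = t₁), (c₂ t₂ : ℝ) * σ₁ (τ t₂) := by
            refine Finset.sum_congr rfl fun t₁ _ => Finset.sum_congr rfl fun t₂ ht₂ => ?_
            rw [(Finset.mem_filter.mp ht₂).2]
        _ = ∑ t₂, (c₂ t₂ : ℝ) * σ₁ (τ t₂) := Finset.sum_fiberwise _ _ _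
        _ = ∑ t₂, (c₂ t₂ : ℝ) * σ₂ t₂ := by
            exact Finset.sum_congr rfl fun t₂ _ => by rw [hτF τ hτ t₂]
    refine ⟨x₁, ?_, ?_, ?_, ?_⟩
    · -- nonnegativity
      intro c
      rw [hx₁, Finset.sum_apply']
      refine Finset.sum_nonneg fun τ _ => ?_
      rw [Finsupp.smul_apply, smul_eq_mul]
      exact mul_nonneg (hw0 τ) (mapDomain_nonneg _ _ hx₂0 c)
    · -- configurations
      intro c hc
      rw [hx₁] at hc
      obtain ⟨τ, hτ, hc⟩ := Finsupp.mem_support_finset_sum c hc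
      have hc' : c ∈ (x₂.mapDomain (Φ τ)).support := Finsupp.support_smul hc
      have hc'' := Finsupp.mapDomain_support hc'
      obtain ⟨c₂, hc₂, rfl⟩ := Finset.mem_image.mp hc''
      obtain ⟨h1, h2⟩ := hx₂cfg c₂ hc₂
      constructor
      · rw [hkey τ hτ c₂]; exact h1
      · intro t₁ ht₁
        have hex : ∃ t₂ ∈ univ.filter (fun t₂ => τ t₂ = t₁), 0 < c₂ t₂ := by
          by_contra hcon
          push_neg at hcon
          have hz : Φ τ c₂ t₁ = 0 := by
            simp only [hΦ]
            exact Finset.sum_eq_zero fun t₂ ht₂ => Nat.le_zero.mp (hcon t₂ ht₂)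
          omega
        obtain ⟨t₂, ht₂, hpos⟩ := hex
        have hσeq : σ₁ t₁ = σ₂ t₂ := by
          rw [← (Finset.mem_filter.mp ht₂).2]
          exact hτF τ hτ t₂
        rw [hkey τ hτ c₂, hσeq]
        exact h2 t₂ hpos
    · -- coverage
      intro t₁
      have htotal : (∑ c ∈ x₁.support, x₁ c * (c t₁ : ℝ))
          = ∑ t₂, (if σ₁ t₁ = σ₂ t₂ then lam t₂ t₁ else 0)
              * (∑ c ∈ x₂.support, x₂ c * (c t₂ : ℝ)) := by
        have e0 : (∑ c ∈ x₁.support, x₁ c * (c t₁ : ℝ))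
            = x₁.sum fun c y => y * (c t₁ : ℝ) := rfl
        rw [e0, hsum_eval fun c => (c t₁ : ℝ)]
        have inner : ∀ τ, x₂.sum (fun c y => y * (Φ τ c t₁ : ℝ))
            = ∑ t₂ ∈ univ.filter (fun t₂ => τ t₂ = t₁),
                ∑ c ∈ x₂.support, x₂ c * (c t₂ : ℝ) := by
          intro τ
          rw [Finsupp.sum]
          rw [Finset.sum_comm]
          refine Finset.sum_congr rfl fun c _ => ?_
          simp only [hΦ]
          push_cast
          rw [Finset.mul_sum]
        calc ∑ τ ∈ T, w τ * x₂.sum (fun c y => y * (Φ τ c t₁ : ℝ))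
            = ∑ τ ∈ T, ∑ t₂ : ι₂, if τ t₂ = t₁
                then w τ * (∑ c ∈ x₂.support, x₂ c * (c t₂ : ℝ)) else 0 := by
              refine Finset.sum_congr rfl fun τ _ => ?_
              rw [inner τ, Finset.mul_sum, Finset.sum_filter]
          _ = ∑ t₂ : ι₂, ∑ τ ∈ T, if τ t₂ = t₁
                then w τ * (∑ c ∈ x₂.support, x₂ c * (c t₂ : ℝ)) else 0 :=
              Finset.sum_comm
          _ = ∑ t₂ : ι₂, (∑ τ ∈ T.filter (fun τ => τ t₂ = t₁), w τ)
                * (∑ c ∈ x₂.support, x₂ c * (c t₂ : ℝ)) := by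
              refine Finset.sum_congr rfl fun t₂ _ => ?_
              rw [← Finset.sum_filter, Finset.sum_mul]
          _ = _ := by
              refine Finset.sum_congr rfl fun t₂ _ => ?_
              rw [hW t₂ t₁]
      rw [htotal]
      have hfe : ∑ t₂ : ι₂, (if σ₁ t₁ = σ₂ t₂ then lam t₂ t₁ else 0)
            * (∑ c ∈ x₂.support, x₂ c * (c t₂ : ℝ))
          = ∑ t₂ ∈ univ.filter (fun t₂ => σ₁ t₁ = σ₂ t₂),
              lam t₂ t₁ * (∑ c ∈ x₂.support, x₂ c * (c t₂ : ℝ)) := by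
        rw [Finset.sum_filter]
        exact Finset.sum_congr rfl fun t₂ _ => by rw [ite_mul, zero_mul]
      rw [hfe]
      have hstep : ∑ t₂ ∈ univ.filter (fun t₂ => σ₁ t₁ = σ₂ t₂),
            lam t₂ t₁ * (2 * N₂ t₂)
          ≤ ∑ t₂ ∈ univ.filter (fun t₂ => σ₁ t₁ = σ₂ t₂),
              lam t₂ t₁ * (∑ c ∈ x₂.support, x₂ c * (c t₂ : ℝ)) := by
        refine Finset.sum_le_sum fun t₂ _ => ?_
        exact mul_le_mul_of_nonneg_left (hx₂cov t₂) (hlam0 t₂ t₁)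
      refine le_trans (le_of_eq ?_) hstep
      -- 2 * N₁ t₁ = ∑ lam * (2 * N₂)
      have hconst : ∀ t₂ ∈ univ.filter (fun t₂ => σ₁ t₁ = σ₂ t₂),
          lam t₂ t₁ * (2 * N₂ t₂) = (N₁ t₁ / M (σ₁ t₁)) * 2 * N₂ t₂ := by
        intro t₂ ht₂
        have := (Finset.mem_filter.mp ht₂).2
        simp only [hlam]
        rw [← this]
        ring
      rw [Finset.sum_congr rfl hconst, ← Finset.mul_sum]
      have hfilt : univ.filter (fun t₂ => σ₁ t₁ = σ₂ t₂)
          = univ.filter (fun t₂ => σ₂ t₂ = σ₁ t₁) := by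
        exact Finset.filter_congr fun t₂ _ => by simp [eq_comm]
      rw [hfilt]
      have hMsum : ∑ t₂ ∈ univ.filter (fun t₂ => σ₂ t₂ = σ₁ t₁), N₂ t₂ = M (σ₁ t₁) := by
        simp only [hN₂, hM]
        exact fiber_sum s p₂ σ₂ hσ₂ (σ₁ t₁)
      rw [hMsum]
      have hMne : M (σ₁ t₁) ≠ 0 := ne_of_gt (hMpos₁ t₁)
      field_simp
      simp only [hN₁, Nat.card_eq_fintype_card]
    · -- total value
      have e0 : (∑ c ∈ x₁.support, x₁ c) = x₁.sum fun _ y => y := rfl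
      rw [e0]
      have h := hsum_eval (fun _ => (1 : ℝ))
      simp only [mul_one] at h
      rw [h, ← Finset.sum_mul, hw_sum, one_mul]
      rfl
  exact csInf_le_csInf hbdd hne hsub

/-- For demand sizes `s 1, …, s n` in `(0, min 1 (B/2)]`, the optimal value of the
configuration LP relative to a partition of the index set into classes on each of which the
size is constant does not depend on the partition: any two such partitions (in particular,
the partition into classes of equal size values) give the same optimal value. -/
theorem stmt_15 (B : ℝ) (hB : 1 ≤ B) (n : ℕ) (s : Fin n → ℝ)
    (hs : ∀ i, 0 < s i ∧ s i ≤ min 1 (B / 2))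
    {ι₁ ι₂ : Type} [Fintype ι₁] [Fintype ι₂]
    (p₁ : Fin n → ι₁) (σ₁ : ι₁ → ℝ) (hp₁ : Function.Surjective p₁)
    (hσ₁ : ∀ i, s i = σ₁ (p₁ i))
    (p₂ : Fin n → ι₂) (σ₂ : ι₂ → ℝ) (hp₂ : Function.Surjective p₂)
    (hσ₂ : ∀ i, s i = σ₂ (p₂ i)) :
    LPvalue B p₁ σ₁ = LPvalue B p₂ σ₂ :=
  le_antisymm
    (LP_le B hB n s hs p₁ σ₁ hp₁ hσ₁ p₂ σ₂ hp₂ hσ₂)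
    (LP_le B hB n s hs p₂ σ₂ hp₂ hσ₂ p₁ σ₁ hp₁ hσ₁)
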